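/- Let A ∈ ℝ^{n×n}, let x ∈ ℝⁿ be a unit vector with xᵀA = λxᵀ for some λ ∈ ℝ, let Q ∈ ℝ^{n×(n−1)} satisfy QᵀQ = I_{n−1} and QQᵀ = I_n − x xᵀ, and let b ∈ ℝⁿ with xᵀb = 0. Then for every integer k ≥ 0, (QᵀAQ)ᵏ (Qᵀ b) = Qᵀ (Aᵏ b); consequently the polynomial Krylov subspace span{Qᵀb, (QᵀAQ)Qᵀb, …, (QᵀAQ)^{k−1}Qᵀb} equals the image under Qᵀ of span{b, Ab, …, A^{k−1}b}. -/

import Mathlib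

open Matrix

/-- Projected powers identity: `(Qᵀ A Q)ᵏ (Qᵀ b) = Qᵀ (Aᵏ b)` for all `k`, and hence
the polynomial Krylov subspace of `(Qᵀ A Q, Qᵀ b)` is the image under `Qᵀ` of the
polynomial Krylov subspace of `(A, b)`. -/
theorem projected_krylov_powers {n : ℕ}
    (A : Matrix (Fin n) (Fin n) ℝ) (x : Fin n → ℝ) (hx : x ⬝ᵥ x = 1)
    (lam : ℝ) (hxA : x ᵥ* A = lam • x)
    (Q : Matrix (Fin n) (Fin (n - 1)) ℝ)
    (hQ1 : Qᵀ * Q = 1)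
    (hQ2 : Q * Qᵀ = 1 - Matrix.vecMulVec x x)
    (b : Fin n → ℝ) (hb : x ⬝ᵥ b = 0) :
    (∀ k : ℕ, ((Qᵀ * A * Q) ^ k) *ᵥ (Qᵀ *ᵥ b) = Qᵀ *ᵥ ((A ^ k) *ᵥ b)) ∧
      ∀ k : ℕ,
        Submodule.span ℝ {v : Fin (n - 1) → ℝ |
            ∃ j < k, v = ((Qᵀ * A * Q) ^ j) *ᵥ (Qᵀ *ᵥ b)}
          = Submodule.map (Matrix.mulVecLin Qᵀ)
              (Submodule.span ℝ {v : Fin n → ℝ | ∃ j < k, v = (A ^ j) *ᵥ b}) := by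
  -- x is orthogonal to all A^k b
  have horth : ∀ k : ℕ, x ⬝ᵥ ((A ^ k) *ᵥ b) = 0 := by
    intro k
    induction k with
    | zero => simpa using hb
    | succ k ih =>
        have : x ⬝ᵥ ((A ^ (k+1)) *ᵥ b) = (x ᵥ* A) ⬝ᵥ ((A ^ k) *ᵥ b) := by
          rw [pow_succ']
          rw [← Matrix.mulVec_mulVec, Matrix.dotProduct_mulVec]
        rw [this, hxA, smul_dotProduct, ih, smul_zero]
  -- Q Qᵀ fixes A^k b
  have hfix : ∀ k : ℕ, (Q * Qᵀ) *ᵥ ((A ^ k) *ᵥ b) = (A ^ k) *ᵥ b := by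
    intro k
    rw [hQ2, Matrix.sub_mulVec, Matrix.one_mulVec]
    have : Matrix.vecMulVec x x *ᵥ ((A ^ k) *ᵥ b) = (x ⬝ᵥ ((A ^ k) *ᵥ b)) • x := by
      ext i
      simp [Matrix.vecMulVec_apply, Matrix.mulVec, dotProduct, Finset.mul_sum,
        Finset.sum_mul, mul_comm, mul_left_comm, mul_assoc]
    rw [this, horth k, zero_smul, sub_zero]
  have h1 : ∀ k : ℕ, ((Qᵀ * A * Q) ^ k) *ᵥ (Qᵀ *ᵥ b) = Qᵀ *ᵥ ((A ^ k) *ᵥ b) := by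
    intro k
    induction k with
    | zero => simp
    | succ k ih =>
        rw [pow_succ', ← Matrix.mulVec_mulVec, ih,
          Matrix.mulVec_mulVec ((A ^ k) *ᵥ b) (Qᵀ * A * Q) Qᵀ,
          Matrix.mul_assoc (Qᵀ * A) Q Qᵀ,
          ← Matrix.mulVec_mulVec ((A ^ k) *ᵥ b) (Qᵀ * A) (Q * Qᵀ),
          hfix k, ← Matrix.mulVec_mulVec (A ^ k *ᵥ b) Qᵀ A,
          Matrix.mulVec_mulVec b A (A ^ k), ← pow_succ']
  refine ⟨h1, fun k => ?_⟩
  rw [Submodule.map_span]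
  congr 1
  ext v
  constructor
  · rintro ⟨j, hj, rfl⟩
    exact ⟨(A ^ j) *ᵥ b, ⟨j, hj, rfl⟩, by rw [Matrix.mulVecLin_apply, h1 j]⟩
  · rintro ⟨w, ⟨j, hj, rfl⟩, rfl⟩
    exact ⟨j, hj, by rw [Matrix.mulVecLin_apply, h1 j]⟩
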